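/- Let (P,d) be a nonempty perfect complete metric space. Then for every countable ordinal α and every nonzero natural number p, there exists a compact countable subset K of P whose Cantor-Bendixson characteristic satisfies CB(K) = (α,p), i.e., α is the least ordinal with K^(α) finite and |K^(α)| = p. -/

import Mathlib

/-- The Cantor-Bendixson derivative of a set, by transfinite recursion. -/
noncomputable def cbDeriv {X : Type*} [TopologicalSpace X] (A : Set X) (o : Ordinal) : Set X :=
  Ordinal.limitRecOn o A (fun _ ih => derivedSet ih)
    (fun o _ ih => ⋂ (b : Set.Iio o), ih b.1 b.2)

/-- `IsCB A α p` : the Cantor-Bendixson characteristic of `A` is `(α, p)`,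
i.e. `α` is the least ordinal with `A^(α)` finite, and `p = |A^(α)|`. -/
def IsCB {X : Type*} [TopologicalSpace X] (A : Set X) (α : Ordinal) (p : ℕ) : Prop :=
  (cbDeriv A α).Finite ∧ (∀ β < α, ¬ (cbDeriv A β).Finite) ∧ (cbDeriv A α).ncard = p

open Set Order Filter Topology

section Basic

variable {X : Type*} [TopologicalSpace X]

lemma cbDeriv_zero (A : Set X) : cbDeriv A 0 = A := by
  unfold cbDeriv; exact Ordinal.limitRecOn_zero _ _ _

lemma cbDeriv_succ (A : Set X) (o : Ordinal) :
    cbDeriv A (Order.succ o) = derivedSet (cbDeriv A o) := by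
  unfold cbDeriv; exact Ordinal.limitRecOn_succ _ _ _ _

lemma cbDeriv_limit (A : Set X) {o : Ordinal} (h : Order.IsSuccLimit o) :
    cbDeriv A o = ⋂ (b : Set.Iio o), cbDeriv A b.1 := by
  unfold cbDeriv; exact Ordinal.limitRecOn_limit _ _ _ _ h

lemma mem_derivedSet_iff {A : Set X} {x : X} : x ∈ derivedSet A ↔ x ∈ closure (A \ {x}) := by
  rw [mem_derivedSet, accPt_principal_iff_clusterPt, mem_closure_iff_clusterPt]

lemma derivedSet_of_finite [T1Space X] {A : Set X} (hA : A.Finite) : derivedSet A = ∅ := by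
  ext x
  simp only [mem_empty_iff_false, iff_false]
  intro h
  rw [mem_derivedSet_iff, hA.diff.isClosed.closure_eq] at h
  exact h.2 rfl

lemma cbDeriv_isClosed [T1Space X] {A : Set X} (hA : IsClosed A) (o : Ordinal) :
    IsClosed (cbDeriv A o) := by
  induction o using Ordinal.limitRecOn with
  | zero => rw [cbDeriv_zero]; exact hA
  | add_one o ih => rw [Ordinal.add_one_eq_succ, cbDeriv_succ]; exact isClosed_derivedSet _
  | limit o ho ih => rw [cbDeriv_limit A ho]; exact isClosed_iInter fun b => ih b.1 b.2

lemma cbDeriv_anti [T1Space X] {A : Set X} (hA : IsClosed A) :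
    ∀ {β γ : Ordinal}, β ≤ γ → cbDeriv A γ ⊆ cbDeriv A β := by
  intro β γ
  induction γ using Ordinal.limitRecOn with
  | zero => intro h; rw [nonpos_iff_eq_zero.mp h]
  | add_one o ih =>
    rw [Ordinal.add_one_eq_succ]
    intro h
    rcases Order.le_succ_iff_eq_or_le.mp h with rfl | h
    · exact Subset.rfl
    · rw [cbDeriv_succ]
      exact ((isClosed_iff_derivedSet_subset _).mp (cbDeriv_isClosed hA o)).trans (ih h)
  | limit o ho ih =>
    intro h
    rcases eq_or_lt_of_le h with rfl | h
    · exact Subset.rfl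
    · rw [cbDeriv_limit A ho]
      exact iInter_subset (fun b : Set.Iio o => cbDeriv A b.1) ⟨β, h⟩

lemma cbDeriv_subset [T1Space X] {A : Set X} (hA : IsClosed A) (o : Ordinal) :
    cbDeriv A o ⊆ A := by
  have := cbDeriv_anti hA (zero_le (a := o))
  rwa [cbDeriv_zero] at this

lemma cbDeriv_empty [T1Space X] (o : Ordinal) : cbDeriv (∅ : Set X) o = ∅ :=
  subset_empty_iff.mp (cbDeriv_subset isClosed_empty o)

lemma cbDeriv_union [T1Space X] {A B : Set X} (hA : IsClosed A) (hB : IsClosed B)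
    (hAB : Disjoint A B) (o : Ordinal) :
    cbDeriv (A ∪ B) o = cbDeriv A o ∪ cbDeriv B o := by
  induction o using Ordinal.limitRecOn with
  | zero => rw [cbDeriv_zero, cbDeriv_zero, cbDeriv_zero]
  | add_one o ih => rw [Ordinal.add_one_eq_succ, cbDeriv_succ, ih, derivedSet_union, cbDeriv_succ, cbDeriv_succ]
  | limit o ho ih =>
    rw [cbDeriv_limit _ ho, cbDeriv_limit _ ho, cbDeriv_limit _ ho,
      iInter_congr (fun b : Set.Iio o => ih b.1 b.2)]
    ext x
    simp only [mem_iInter, mem_union]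
    constructor
    · intro h
      by_cases hx : x ∈ B
      · refine Or.inr fun b => ?_
        rcases h b with h' | h'
        · exact absurd hx (disjoint_left.mp hAB (cbDeriv_subset hA b.1 h'))
        · exact h'
      · refine Or.inl fun b => ?_
        rcases h b with h' | h'
        · exact h'
        · exact absurd (cbDeriv_subset hB b.1 h') hx
    · rintro (h | h) b
      · exact Or.inl (h b)
      · exact Or.inr (h b)

variable {Y : Type*} [TopologicalSpace Y]

lemma derivedSet_image {f : X → Y} (hf : Topology.IsClosedEmbedding f) (S : Set X) :
    derivedSet (f '' S) = f '' derivedSet S := by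
  refine subset_antisymm ?_ (hf.continuous.image_derivedSet hf.injective)
  intro y hy
  rw [mem_derivedSet_iff] at hy
  by_cases hr : y ∈ Set.range f
  · obtain ⟨x, rfl⟩ := hr
    rw [show f '' S \ {f x} = f '' (S \ {x}) by
        rw [Set.image_diff hf.injective, Set.image_singleton],
      hf.closure_image_eq] at hy
    obtain ⟨x', hx', hxx⟩ := hy
    obtain rfl := hf.injective hxx
    exact ⟨x', mem_derivedSet_iff.mpr hx', rfl⟩
  · exact absurd
      (closure_minimal (diff_subset.trans (image_subset_range f S)) hf.isClosed_range hy) hr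

lemma cbDeriv_image {f : X → Y} (hf : Topology.IsClosedEmbedding f) (S : Set X) (o : Ordinal) :
    cbDeriv (f '' S) o = f '' cbDeriv S o := by
  induction o using Ordinal.limitRecOn with
  | zero => rw [cbDeriv_zero, cbDeriv_zero]
  | add_one o ih => rw [Ordinal.add_one_eq_succ, cbDeriv_succ, ih, cbDeriv_succ, derivedSet_image hf]
  | limit o ho ih =>
    have : Nonempty (Set.Iio o) := ⟨⟨0, ho.pos⟩⟩
    rw [cbDeriv_limit _ ho, cbDeriv_limit _ ho,
      Set.InjOn.image_iInter_eq hf.injective.injOn]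
    exact iInter_congr fun b => ih b.1 b.2

end Basic
section Cantor

/-- The all-`true` point of Cantor space. -/
def cTop : ℕ → Bool := fun _ => true

/-- Embedding of Cantor space onto the clopen set `cU n`. -/
def cEmb (n : ℕ) (f : ℕ → Bool) : ℕ → Bool :=
  fun k => if k < n then true else if k = n then false else f (k - (n + 1))

/-- The basic clopen set: `true` on the first `n` coordinates, `false` at `n`. -/
def cU (n : ℕ) : Set (ℕ → Bool) := {f | (∀ i, i < n → f i = true) ∧ f n = false}

lemma continuous_cEmb (n : ℕ) : Continuous (cEmb n) := by
  apply continuous_pi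
  intro k
  by_cases h1 : k < n
  · simp only [cEmb, if_pos h1]; exact continuous_const
  by_cases h2 : k = n
  · simp only [cEmb, if_neg h1, if_pos h2]; exact continuous_const
  · simp only [cEmb, if_neg h1, if_neg h2]; exact continuous_apply _

lemma cEmb_injective (n : ℕ) : Function.Injective (cEmb n) := by
  intro f g h
  funext k
  have h0 := congrFun h (k + (n + 1))
  have h1 : ¬ (k + (n + 1) < n) := by omega
  have h2 : ¬ (k + (n + 1) = n) := by omega
  simp only [cEmb, if_neg h1, if_neg h2, Nat.add_sub_cancel] at h0
  exact h0

lemma cEmb_mem_cU (n : ℕ) (f : ℕ → Bool) : cEmb n f ∈ cU n := by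
  constructor
  · intro i hi; simp only [cEmb, if_pos hi]
  · show (if n < n then true else if n = n then false else f (n - (n + 1))) = false
    rw [if_neg (lt_irrefl n), if_pos rfl]

lemma image_subset_cU (n : ℕ) (S : Set (ℕ → Bool)) : cEmb n '' S ⊆ cU n := by
  rintro _ ⟨f, -, rfl⟩; exact cEmb_mem_cU n f

lemma cU_disjoint {m n : ℕ} (h : m ≠ n) : Disjoint (cU m) (cU n) := by
  rcases Nat.lt_or_ge m n with hmn | hmn
  · refine Set.disjoint_left.mpr fun f hm hn => ?_
    have := hn.1 m hmn
    rw [hm.2] at this; exact Bool.false_ne_true this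
  · have hnm : n < m := by omega
    refine Set.disjoint_left.mpr fun f hm hn => ?_
    have := hm.1 n hnm
    rw [hn.2] at this; exact Bool.false_ne_true this

lemma cTop_not_mem_cU (n : ℕ) : cTop ∉ cU n := fun h => by
  have := h.2; simp [cTop] at this

lemma exists_mem_cU {f : ℕ → Bool} (hf : f ≠ cTop) : ∃ n, f ∈ cU n := by
  have hex : ∃ n, f n = false := by
    by_contra h
    push_neg at h
    exact hf (funext fun n => by
      have := h n
      simp only [cTop]
      exact eq_true_of_ne_false this)
  refine ⟨Nat.find hex, fun i hi => ?_, Nat.find_spec hex⟩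
  have := Nat.find_min hex hi
  exact eq_true_of_ne_false this

lemma isClopen_cU (n : ℕ) : IsClopen (cU n) := by
  have : cU n = (⋂ i ∈ Finset.range n, (fun f : ℕ → Bool => f i) ⁻¹' {true}) ∩
      ((fun f : ℕ → Bool => f n) ⁻¹' {false}) := by
    ext f
    simp [cU, Finset.mem_range]
  rw [this]
  exact IsClopen.inter
    (isClopen_biInter_finset fun i _ => (isClopen_discrete {true}).preimage (continuous_apply i))
    ((isClopen_discrete {false}).preimage (continuous_apply n))

lemma tendsto_cU (x : ℕ → (ℕ → Bool)) (hx : ∀ n, x n ∈ cU n) :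
    Filter.Tendsto x Filter.atTop (nhds cTop) := by
  rw [tendsto_pi_nhds]
  intro i
  refine Filter.Tendsto.congr' ?_ tendsto_const_nhds
  filter_upwards [Filter.eventually_gt_atTop i] with n hn
  exact ((hx n).1 i hn).symm

lemma isClosedEmbedding_cEmb (n : ℕ) : Topology.IsClosedEmbedding (cEmb n) :=
  (continuous_cEmb n).isClosedEmbedding (cEmb_injective n)

lemma cTop_mem_derivedSet {S : Set (ℕ → Bool)} {T : ℕ → Set (ℕ → Bool)}
    (hT : ∀ n, T n ⊆ cU n) (hTS : ∀ n, T n ⊆ S)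
    (hinf : {n | (T n).Nonempty}.Infinite) : cTop ∈ derivedSet S := by
  classical
  rw [mem_derivedSet_iff]
  set x : ℕ → (ℕ → Bool) := fun n => if h : (T n).Nonempty then h.choose else cEmb n cTop
    with hxdef
  have hxU : ∀ n, x n ∈ cU n := by
    intro n; by_cases h : (T n).Nonempty
    · simp only [hxdef, dif_pos h]; exact hT n h.choose_spec
    · simp only [hxdef, dif_neg h]; exact cEmb_mem_cU n cTop
  refine mem_closure_of_frequently_of_tendsto ?_ (tendsto_cU x hxU)
  rw [Filter.frequently_atTop]
  intro a
  obtain ⟨b, hb1, hb2⟩ := hinf.exists_gt a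
  have hb : (T b).Nonempty := hb1
  refine ⟨b, hb2.le, ?_, ?_⟩
  · have : x b ∈ T b := by simp only [hxdef, dif_pos hb]; exact hb.choose_spec
    exact hTS b this
  · intro h
    have := (hxU b).2
    rw [h] at this
    simp [cTop] at this

/-- The "fan": copies of the `A n` in the disjoint clopen sets `cU n`,
together with their accumulation point `cTop`. -/
def fan (A : ℕ → Set (ℕ → Bool)) : Set (ℕ → Bool) := (⋃ n, cEmb n '' A n) ∪ {cTop}

lemma isClosed_fan {A : ℕ → Set (ℕ → Bool)} (hA : ∀ n, IsClosed (A n)) :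
    IsClosed (fan A) := by
  rw [← isOpen_compl_iff, isOpen_iff_forall_mem_open]
  intro f hf
  have hft : f ≠ cTop := fun h => hf (Or.inr (by rw [h]; rfl))
  obtain ⟨m, hm⟩ := exists_mem_cU hft
  have himcl : IsClosed (cEmb m '' A m) :=
    ((hA m).isCompact.image (continuous_cEmb m)).isClosed
  refine ⟨cU m \ cEmb m '' A m, ?_, (isClopen_cU m).isOpen.sdiff himcl, hm,
    fun h => hf (Or.inl (Set.mem_iUnion.mpr ⟨m, h⟩))⟩
  · rintro g ⟨hgU, hgN⟩ (hg | hg)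
    · obtain ⟨n, hn⟩ := Set.mem_iUnion.mp hg
      rcases eq_or_ne n m with rfl | hnm
      · exact hgN hn
      · exact Set.disjoint_left.mp (cU_disjoint hnm) (image_subset_cU n _ hn) hgU
    · rw [Set.mem_singleton_iff] at hg
      exact cTop_not_mem_cU m (hg ▸ hgU)

lemma countable_fan {A : ℕ → Set (ℕ → Bool)} (hA : ∀ n, (A n).Countable) :
    (fan A).Countable :=
  (Set.countable_iUnion fun n => (hA n).image _).union (Set.countable_singleton _)

lemma derivedSet_iUnion_subset (S : ℕ → Set (ℕ → Bool)) :
    derivedSet (⋃ n, cEmb n '' S n) ⊆ (⋃ n, cEmb n '' derivedSet (S n)) ∪ {cTop} := by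
  intro y hy
  by_cases hyt : y = cTop
  · exact Or.inr (by simp [hyt])
  obtain ⟨m, hm⟩ := exists_mem_cU hyt
  left
  rw [mem_derivedSet_iff] at hy
  have h2 : cU m ∩ ((⋃ n, cEmb n '' S n) \ {y}) ⊆ (cEmb m '' S m) \ {y} := by
    rintro g ⟨hgU, hg, hgy⟩
    refine ⟨?_, hgy⟩
    obtain ⟨n, hn⟩ := Set.mem_iUnion.mp hg
    rcases eq_or_ne n m with rfl | hnm
    · exact hn
    · exact absurd hgU (Set.disjoint_left.mp (cU_disjoint hnm) (image_subset_cU n _ hn))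
  have h3 : y ∈ closure ((cEmb m '' S m) \ {y}) :=
    closure_mono h2 ((isClopen_cU m).isOpen.inter_closure ⟨hm, hy⟩)
  have h4 : y ∈ derivedSet (cEmb m '' S m) := mem_derivedSet_iff.mpr h3
  rw [derivedSet_image (isClosedEmbedding_cEmb m)] at h4
  exact Set.mem_iUnion.mpr ⟨m, h4⟩

lemma cbDeriv_fan (A : ℕ → Set (ℕ → Bool)) (hA : ∀ n, IsClosed (A n)) (β : Ordinal)
    (hinf : ∀ γ < β, {n | (cbDeriv (A n) γ).Nonempty}.Infinite) :
    cbDeriv (fan A) β = (⋃ n, cEmb n '' cbDeriv (A n) β) ∪ {cTop} := by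
  induction β using Ordinal.limitRecOn with
  | zero =>
    simp only [cbDeriv_zero]
    rfl
  | add_one β ih =>
    rw [Ordinal.add_one_eq_succ] at hinf ⊢
    have hβ : ∀ γ < β, {n | (cbDeriv (A n) γ).Nonempty}.Infinite :=
      fun γ hγ => hinf γ (hγ.trans (Order.lt_succ β))
    rw [cbDeriv_succ, ih hβ, derivedSet_union,
      derivedSet_of_finite (Set.finite_singleton cTop), Set.union_empty]
    apply subset_antisymm
    · intro y hy
      rcases derivedSet_iUnion_subset (fun n => cbDeriv (A n) β) hy with h | h
      · refine Or.inl ?_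
        obtain ⟨n, hn⟩ := Set.mem_iUnion.mp h
        rw [← cbDeriv_succ] at hn
        exact Set.mem_iUnion.mpr ⟨n, hn⟩
      · exact Or.inr h
    · apply Set.union_subset
      · refine Set.iUnion_subset fun n => ?_
        rw [cbDeriv_succ, ← derivedSet_image (isClosedEmbedding_cEmb n)]
        exact derivedSet_mono _ _ (Set.subset_iUnion (fun n => cEmb n '' cbDeriv (A n) β) n)
      · rw [Set.singleton_subset_iff]
        refine cTop_mem_derivedSet (fun n => image_subset_cU n _)
          (fun n => Set.subset_iUnion (fun n => cEmb n '' cbDeriv (A n) β) n) ?_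
        refine Set.Infinite.mono ?_ (hinf β (Order.lt_succ β))
        intro n hn
        exact Set.image_nonempty.mpr hn
  | limit β hβlim ih =>
    have hne : Nonempty (Set.Iio β) := ⟨⟨0, hβlim.pos⟩⟩
    have hIH : ∀ b : Set.Iio β,
        cbDeriv (fan A) b.1 = (⋃ n, cEmb n '' cbDeriv (A n) b.1) ∪ {cTop} :=
      fun b => ih b.1 b.2 (fun γ hγ => hinf γ (hγ.trans b.2))
    rw [cbDeriv_limit _ hβlim]
    apply subset_antisymm
    · intro x hx
      rw [Set.mem_iInter] at hx
      by_cases hxt : x = cTop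
      · exact Or.inr (by simp [hxt])
      refine Or.inl ?_
      obtain ⟨m, hmU⟩ := exists_mem_cU hxt
      have key : ∀ b : Set.Iio β, x ∈ cEmb m '' cbDeriv (A m) b.1 := by
        intro b
        have h := hx b
        rw [hIH b] at h
        rcases h with h | h
        · obtain ⟨n, hn⟩ := Set.mem_iUnion.mp h
          rcases eq_or_ne n m with rfl | hnm
          · exact hn
          · exact absurd hmU
              (Set.disjoint_left.mp (cU_disjoint hnm) (image_subset_cU n _ hn))
        · exact absurd (Set.mem_singleton_iff.mp h) hxt
      refine Set.mem_iUnion.mpr ⟨m, ?_⟩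
      rw [cbDeriv_limit _ hβlim, Set.InjOn.image_iInter_eq (cEmb_injective m).injOn]
      exact Set.mem_iInter.mpr key
    · apply Set.union_subset
      · refine Set.iUnion_subset fun n => ?_
        refine Set.subset_iInter fun b => ?_
        rw [hIH b]
        refine Set.subset_union_left.trans' ?_
        refine (Set.subset_iUnion (fun n => cEmb n '' cbDeriv (A n) b.1) n).trans' ?_
        exact Set.image_mono (cbDeriv_anti (hA n) b.2.le)
      · refine Set.subset_iInter fun b => ?_
        rw [hIH b]
        exact Set.subset_union_right

end Cantor
section Main

lemma cantor_exists (α : Ordinal) (hα : α < (Cardinal.aleph 1).ord) :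
    ∃ K : Set (ℕ → Bool), IsClosed K ∧ K.Countable ∧ cbDeriv K α = {cTop} := by
  induction α using Ordinal.induction with
  | _ α IH =>
  rcases Ordinal.zero_or_succ_or_isSuccLimit α with rfl | ⟨β, rfl⟩ | hlim
  · exact ⟨{cTop}, isClosed_singleton, Set.countable_singleton _, cbDeriv_zero _⟩
  · -- successor case
    have hβ : β < Order.succ β := Order.lt_succ β
    obtain ⟨K, hKc, hKcnt, hKd⟩ := IH β hβ (hβ.trans hα)
    refine ⟨fan (fun _ => K), isClosed_fan (fun _ => hKc), countable_fan (fun _ => hKcnt), ?_⟩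
    have hinf : ∀ γ < Order.succ β, {n : ℕ | (cbDeriv K γ).Nonempty}.Infinite := by
      intro γ hγ
      have hne : (cbDeriv K γ).Nonempty := by
        refine ⟨cTop, cbDeriv_anti hKc (Order.lt_succ_iff.mp hγ) ?_⟩
        rw [hKd]; rfl
      have : {n : ℕ | (cbDeriv K γ).Nonempty} = Set.univ :=
        Set.eq_univ_of_forall fun n => hne
      rw [this]; exact Set.infinite_univ
    rw [cbDeriv_fan _ (fun _ => hKc) _ hinf]
    have hsucc : cbDeriv K (Order.succ β) = ∅ := by
      rw [cbDeriv_succ, hKd]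
      exact derivedSet_of_finite (Set.finite_singleton _)
    rw [hsucc]
    simp
  · -- limit case
    have hcard : α.card ≤ Cardinal.aleph0 := by
      have h0 := Cardinal.lt_ord.mp hα
      rwa [← Cardinal.succ_aleph0, Order.lt_succ_iff] at h0
    have hcount : Countable (Set.Iio α) := by
      rw [← Cardinal.mk_le_aleph0_iff, Ordinal.mk_Iio_ordinal]
      exact Cardinal.lift_le_aleph0.mpr hcard
    have hne : Nonempty (Set.Iio α) := ⟨⟨0, hlim.pos⟩⟩
    obtain ⟨h, hsurj⟩ := exists_surjective_nat (Set.Iio α)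
    set g : ℕ → Ordinal := fun n => (Finset.range (n + 1)).sup fun k => ((h k).1 : Ordinal)
      with hgdef
    have hglt : ∀ n, g n < α := by
      intro n
      refine Finset.sup_lt_iff (by rw [Ordinal.bot_eq_zero]; exact hlim.pos) |>.mpr ?_
      intro k _
      exact (h k).2
    have hgmono : Monotone g := by
      intro a b hab
      exact Finset.sup_mono (Finset.range_subset_range.mpr (by omega))
    have hgcof : ∀ β < α, ∃ n, β ≤ g n := by
      intro β hβ
      obtain ⟨k, hk⟩ := hsurj ⟨β, hβ⟩
      refine ⟨k, ?_⟩
      have : ((h k).1 : Ordinal) = β := by rw [hk]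
      rw [← this]
      simp only [hgdef]
      exact Finset.le_sup (f := fun j => ((h j).1 : Ordinal)) (Finset.self_mem_range_succ k)
    choose Ks hKs using fun n => IH (g n) (hglt n) ((hglt n).trans hα)
    refine ⟨fan Ks, isClosed_fan (fun n => (hKs n).1),
      countable_fan (fun n => (hKs n).2.1), ?_⟩
    have hinf : ∀ γ < α, {n | (cbDeriv (Ks n) γ).Nonempty}.Infinite := by
      intro γ hγ
      obtain ⟨n₀, hn₀⟩ := hgcof γ hγ
      refine Set.Infinite.mono ?_ (Set.Ici_infinite n₀)
      intro n hn
      refine ⟨cTop, cbDeriv_anti (hKs n).1 (hn₀.trans (hgmono hn)) ?_⟩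
      rw [(hKs n).2.2]; rfl
    rw [cbDeriv_fan Ks (fun n => (hKs n).1) α hinf]
    have hempty : ∀ n, cbDeriv (Ks n) α = ∅ := by
      intro n
      have h1 : cbDeriv (Ks n) (Order.succ (g n)) = ∅ := by
        rw [cbDeriv_succ, (hKs n).2.2]
        exact derivedSet_of_finite (Set.finite_singleton _)
      have h2 : cbDeriv (Ks n) α ⊆ cbDeriv (Ks n) (Order.succ (g n)) :=
        cbDeriv_anti (hKs n).1 (hlim.succ_lt (hglt n)).le
      exact Set.subset_empty_iff.mp (h1 ▸ h2)
    simp [hempty]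

lemma cbDeriv_finUnion (K : Set (ℕ → Bool)) (hK : IsClosed K) (p : ℕ) (β : Ordinal) :
    cbDeriv (⋃ i ∈ Finset.range p, cEmb i '' K) β
      = ⋃ i ∈ Finset.range p, cEmb i '' cbDeriv K β := by
  induction p with
  | zero => simp [cbDeriv_empty]
  | succ p ih =>
    have hcl1 : IsClosed (cEmb p '' K) := (hK.isCompact.image (continuous_cEmb p)).isClosed
    have hcl2 : IsClosed (⋃ i ∈ Finset.range p, cEmb i '' K) :=
      isClosed_biUnion_finset fun i _ => (hK.isCompact.image (continuous_cEmb i)).isClosed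
    have hdisj : Disjoint (cEmb p '' K) (⋃ i ∈ Finset.range p, cEmb i '' K) := by
      refine Set.disjoint_left.mpr fun x hx1 hx2 => ?_
      simp only [Set.mem_iUnion, Finset.mem_range, exists_prop] at hx2
      obtain ⟨i, hip, hxi⟩ := hx2
      exact Set.disjoint_left.mp (cU_disjoint (by omega : i ≠ p))
        (image_subset_cU i _ hxi) (image_subset_cU p _ hx1)
    rw [Finset.range_add_one, Finset.set_biUnion_insert, Finset.set_biUnion_insert,
      cbDeriv_union hcl1 hcl2 hdisj, ih, cbDeriv_image (isClosedEmbedding_cEmb p)]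

end Main

theorem stmt12 {P : Type*} [MetricSpace P] [CompleteSpace P] [Nonempty P]
    (hperf : derivedSet (Set.univ : Set P) = Set.univ)
    (α : Ordinal) (hα : α < (Cardinal.aleph 1).ord) (p : ℕ) (hp : p ≠ 0) :
    ∃ K : Set P, IsCompact K ∧ K.Countable ∧ IsCB K α p := by
  classical
  have hperf' : Perfect (Set.univ : Set P) :=
    ⟨isClosed_univ, fun x _ => by
      have : x ∈ derivedSet (Set.univ : Set P) := by rw [hperf]; exact Set.mem_univ x
      exact this⟩
  obtain ⟨f, -, hfc, hfi⟩ := hperf'.exists_nat_bool_injection Set.univ_nonempty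
  have hfe : Topology.IsClosedEmbedding f := hfc.isClosedEmbedding hfi
  obtain ⟨K0, hKc, hKcnt, hKd⟩ := cantor_exists α hα
  set K1 : Set (ℕ → Bool) := ⋃ i ∈ Finset.range p, cEmb i '' K0 with hK1def
  have hK1closed : IsClosed K1 :=
    isClosed_biUnion_finset fun i _ => (hKc.isCompact.image (continuous_cEmb i)).isClosed
  have h1 : ∀ β, cbDeriv K1 β = ⋃ i ∈ Finset.range p, cEmb i '' cbDeriv K0 β :=
    cbDeriv_finUnion K0 hKc p
  have hK1cnt : K1.Countable :=
    Set.Countable.biUnion (Finset.range p).countable_toSet fun i _ => hKcnt.image _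
  set g : ℕ → P := fun i => f (cEmb i cTop) with hgdef
  have hginj : Function.Injective g := by
    intro i j hij
    have := hfi hij
    by_contra hne
    exact Set.disjoint_left.mp (cU_disjoint hne) (cEmb_mem_cU i cTop)
      (this ▸ cEmb_mem_cU j cTop)
  have htop : cbDeriv (f '' K1) α = g '' ↑(Finset.range p) := by
    rw [cbDeriv_image hfe, h1, hKd]
    ext y
    simp only [Set.mem_image, Set.mem_iUnion, Finset.mem_coe, Finset.mem_range,
      Set.image_singleton, Set.mem_singleton_iff, exists_prop, hgdef]
    constructor
    · rintro ⟨x, ⟨i, hi, rfl⟩, rfl⟩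
      exact ⟨i, hi, rfl⟩
    · rintro ⟨i, hi, rfl⟩
      exact ⟨cEmb i cTop, ⟨i, hi, rfl⟩, rfl⟩
  refine ⟨f '' K1, (hK1closed.isCompact).image hfc, hK1cnt.image f, ?_, ?_, ?_⟩
  · rw [htop]
    exact ((Finset.range p).finite_toSet.image g)
  · intro β hβ hfin
    have hfin' : (cbDeriv K1 β).Finite := by
      rw [cbDeriv_image hfe] at hfin
      exact Set.Finite.of_finite_image hfin hfi.injOn
    have hzero : cbDeriv K1 (Order.succ β) = ∅ := by
      rw [cbDeriv_succ]
      exact derivedSet_of_finite hfin'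
    have hsub : cbDeriv K1 α ⊆ cbDeriv K1 (Order.succ β) :=
      cbDeriv_anti hK1closed (Order.succ_le_of_lt hβ)
    have hmem : cEmb 0 cTop ∈ cbDeriv K1 α := by
      rw [h1, hKd]
      refine Set.mem_biUnion (Finset.mem_range.mpr (Nat.pos_of_ne_zero hp)) ?_
      exact ⟨cTop, rfl, rfl⟩
    rw [hzero] at hsub
    exact hsub hmem
  · rw [htop, Set.ncard_image_of_injective _ hginj, Set.ncard_coe_finset, Finset.card_range]
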